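/- Let L > 0 and let ω > 0 satisfy ω ≤ 1/(2L). Then for every continuously differentiable, mean-value free h : [0,L] → ℝ one has ∫₀^L h'(x)² dx − ω·h(0)² − ω·h(L)² ≥ (1/L − 2ω)·sup_{t∈[0,L]}|h(t)|² ≥ 0. -/
import Mathlib


open Set intervalIntegral

/-- Key stability estimate of Theorem 4.2(3): for `0 < ω ≤ 1/(2L)` and any continuously
differentiable mean-value free `h : [0,L] → ℝ`,
`∫₀^L h'² − ω h(0)² − ω h(L)² ≥ (1/L − 2ω)·sup |h|² ≥ 0`. -/
theorem stability_estimate_short_interval (L ω : ℝ) (hL : 0 < L) (hω : 0 < ω)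
    (hωL : ω ≤ 1 / (2 * L)) (h h' : ℝ → ℝ)
    (hderiv : ∀ x ∈ Icc (0:ℝ) L, HasDerivWithinAt h (h' x) (Icc (0:ℝ) L) x)
    (hcont : ContinuousOn h' (Icc (0:ℝ) L))
    (hmean : (∫ x in (0:ℝ)..L, h x) = 0) :
    (∫ x in (0:ℝ)..L, (h' x) ^ 2) - ω * (h 0) ^ 2 - ω * (h L) ^ 2
      ≥ (1 / L - 2 * ω) * sSup ((fun t => |h t| ^ 2) '' Icc (0:ℝ) L) ∧
    (1 / L - 2 * ω) * sSup ((fun t => |h t| ^ 2) '' Icc (0:ℝ) L) ≥ 0 := by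
  have hIcc : uIcc (0:ℝ) L = Icc 0 L := uIcc_of_le hL.le
  have hconth : ContinuousOn h (Icc (0:ℝ) L) := fun x hx =>
    (hderiv x hx).continuousWithinAt
  have h'int : IntervalIntegrable h' MeasureTheory.volume 0 L :=
    (hcont.mono (by rw [hIcc])).intervalIntegrable
  have habs_cont : ContinuousOn (fun x => |h' x|) (Icc (0:ℝ) L) := hcont.abs
  have habs_int : IntervalIntegrable (fun x => |h' x|) MeasureTheory.volume 0 L :=
    (habs_cont.mono (by rw [hIcc])).intervalIntegrable
  set I := ∫ x in (0:ℝ)..L, (h' x) ^ 2 with hI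
  set J := ∫ x in (0:ℝ)..L, |h' x| with hJ
  have hInonneg : 0 ≤ I :=
    intervalIntegral.integral_nonneg hL.le (fun x _ => sq_nonneg _)
  have hJnonneg : 0 ≤ J :=
    intervalIntegral.integral_nonneg hL.le (fun x _ => abs_nonneg _)
  have hsq_int : IntervalIntegrable (fun x => (h' x) ^ 2) MeasureTheory.volume 0 L :=
    ((hcont.pow 2).mono (by rw [hIcc])).intervalIntegrable
  -- Step 1: J ≤ (a*I + L/a)/2 for all a > 0 (AM-GM pointwise)
  have hJle : ∀ a : ℝ, 0 < a → J ≤ (a * I + L / a) / 2 := by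
    intro a ha
    have int2 : IntervalIntegrable (fun x => (a * (h' x) ^ 2 + 1 / a) / 2)
        MeasureTheory.volume 0 L := ((hsq_int.const_mul a).add
        (intervalIntegrable_const)).div_const 2
    have hmono : J ≤ ∫ x in (0:ℝ)..L, (a * (h' x) ^ 2 + 1 / a) / 2 := by
      apply intervalIntegral.integral_mono_on hL.le habs_int int2
      intro x _
      have h1 : 0 ≤ (a * |h' x| - 1) ^ 2 := sq_nonneg _
      have h2 : |h' x| ^ 2 = (h' x) ^ 2 := sq_abs _
      have h3 : a * (1 / a) = 1 := mul_one_div_cancel ha.ne'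
      rw [le_div_iff₀ (by norm_num : (0:ℝ) < 2)]
      nlinarith [abs_nonneg (h' x), mul_pos ha ha, ha]
    have hcalc : (∫ x in (0:ℝ)..L, (a * (h' x) ^ 2 + 1 / a) / 2)
        = (a * I + L / a) / 2 := by
      rw [intervalIntegral.integral_div,
        intervalIntegral.integral_add (hsq_int.const_mul a) intervalIntegrable_const,
        intervalIntegral.integral_const_mul, intervalIntegral.integral_const]
      simp only [smul_eq_mul, sub_zero, hI]
      ring
    linarith [hmono, hcalc.le, hcalc.ge]
  -- Step 2: J^2 ≤ L * I
  have hJ2 : J ^ 2 ≤ L * I := by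
    rcases eq_or_lt_of_le hJnonneg with hJ0 | hJpos
    · rw [← hJ0]; nlinarith [mul_nonneg hL.le hInonneg]
    · set a := L / J with ha
      have hapos : 0 < a := div_pos hL hJpos
      have hJne : J ≠ 0 := hJpos.ne'
      have haJ : a * J = L := by rw [ha]; field_simp
      have hLa : L / a = J := by rw [ha]; field_simp
      have h1 := hJle a hapos
      rw [hLa] at h1
      have h2 : J ≤ a * I := by linarith
      calc J ^ 2 = J * J := sq J
        _ ≤ (a * I) * J := mul_le_mul_of_nonneg_right h2 hJnonneg
        _ = I * (a * J) := by ring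
        _ = L * I := by rw [haJ]; ring
  -- Step 3: there is a zero of h
  obtain ⟨c, hc, hc0⟩ : ∃ c ∈ Icc (0:ℝ) L, h c = 0 := by
    by_contra hne
    push_neg at hne
    have hint : IntervalIntegrable h MeasureTheory.volume 0 L :=
      (hconth.mono (by rw [hIcc])).intervalIntegrable
    have hsub : ∀ x ∈ Icc (0:ℝ) L, uIcc (0:ℝ) x ⊆ Icc (0:ℝ) L := by
      intro x hx
      rw [uIcc_of_le hx.1]
      exact Icc_subset_Icc le_rfl hx.2
    have h0mem : (0:ℝ) ∈ Icc (0:ℝ) L := left_mem_Icc.mpr hL.le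
    rcases lt_or_gt_of_ne (hne 0 h0mem) with h0neg | h0pos
    · -- h 0 < 0 : h < 0 on Ioo, so ∫ (-h) > 0
      have hposOn : ∀ x ∈ Ioo (0:ℝ) L, 0 < -h x := by
        intro x hx
        have hx' : x ∈ Icc (0:ℝ) L := Ioo_subset_Icc_self hx
        by_contra hcon
        push_neg at hcon
        have hxpos : 0 < h x := lt_of_le_of_ne (by linarith) (Ne.symm (hne x hx'))
        have : (0:ℝ) ∈ uIcc (h 0) (h x) := by
          rw [mem_uIcc]; left; exact ⟨h0neg.le, hxpos.le⟩
        obtain ⟨y, hy, hy0⟩ := intermediate_value_uIcc (hconth.mono (hsub x hx')) this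
        exact hne y (hsub x hx' hy) hy0
      have := intervalIntegral_pos_of_pos_on hint.neg hposOn hL
      simp only [Pi.neg_apply] at this
      rw [intervalIntegral.integral_neg, hmean] at this
      simp at this
    · have hposOn : ∀ x ∈ Ioo (0:ℝ) L, 0 < h x := by
        intro x hx
        have hx' : x ∈ Icc (0:ℝ) L := Ioo_subset_Icc_self hx
        by_contra hcon
        push_neg at hcon
        have hxneg : h x < 0 := lt_of_le_of_ne hcon (hne x hx')
        have : (0:ℝ) ∈ uIcc (h 0) (h x) := by
          rw [mem_uIcc]; right; exact ⟨hxneg.le, h0pos.le⟩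
        obtain ⟨y, hy, hy0⟩ := intermediate_value_uIcc (hconth.mono (hsub x hx')) this
        exact hne y (hsub x hx' hy) hy0
      have := intervalIntegral_pos_of_pos_on hint hposOn hL
      rw [hmean] at this
      exact lt_irrefl 0 this
  -- Step 4: FTC on subintervals
  have key : ∀ u v : ℝ, u ∈ Icc (0:ℝ) L → v ∈ Icc (0:ℝ) L → u ≤ v →
      (∫ y in u..v, h' y) = h v - h u := by
    intro u v hu hv huv
    apply intervalIntegral.integral_eq_sub_of_hasDeriv_right_of_le huv
      (hconth.mono (Icc_subset_Icc hu.1 hv.2))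
    · intro x hx
      have hx' : x ∈ Ioo (0:ℝ) L := ⟨lt_of_le_of_lt hu.1 hx.1, lt_of_lt_of_le hx.2 hv.2⟩
      have hd : HasDerivAt h (h' x) x :=
        (hderiv x (Ioo_subset_Icc_self hx')).hasDerivAt (Icc_mem_nhds hx'.1 hx'.2)
      exact hd.hasDerivWithinAt
    · exact h'int.mono_set (by rw [uIcc_of_le huv, hIcc]; exact Icc_subset_Icc hu.1 hv.2)
  -- Step 5: |h t| ≤ J for all t
  have habs_ae : (0:ℝ → ℝ) ≤ᵐ[MeasureTheory.volume.restrict (Ioc (0:ℝ) L)]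
      (fun x => |h' x|) := MeasureTheory.ae_of_all _ (fun x => abs_nonneg _)
  have hft : ∀ t ∈ Icc (0:ℝ) L, |h t| ≤ J := by
    intro t ht
    rcases le_total c t with hct | htc
    · have hkey := key c t hc ht hct
      have h1 : |h t| = |∫ y in c..t, h' y| := by rw [hkey, hc0, sub_zero]
      rw [h1]
      calc |∫ y in c..t, h' y| ≤ ∫ y in c..t, |h' y| :=
            intervalIntegral.abs_integral_le_integral_abs hct
        _ ≤ J := intervalIntegral.integral_mono_interval hc.1 hct ht.2 habs_ae habs_int
    · have hkey := key t c ht hc htc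
      have h1 : |h t| = |∫ y in t..c, h' y| := by
        rw [hkey, hc0, zero_sub, abs_neg]
      rw [h1]
      calc |∫ y in t..c, h' y| ≤ ∫ y in t..c, |h' y| :=
            intervalIntegral.abs_integral_le_integral_abs htc
        _ ≤ J := intervalIntegral.integral_mono_interval ht.1 htc hc.2 habs_ae habs_int
  -- Step 6: sSup facts
  set K := (fun t => |h t| ^ 2) '' Icc (0:ℝ) L with hK
  have h0mem : (0:ℝ) ∈ Icc (0:ℝ) L := left_mem_Icc.mpr hL.le
  have hLmem : L ∈ Icc (0:ℝ) L := right_mem_Icc.mpr hL.le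
  have hbdd : ∀ y ∈ K, y ≤ L * I := by
    rintro y ⟨t, ht, rfl⟩
    calc |h t| ^ 2 ≤ J ^ 2 := pow_le_pow_left₀ (abs_nonneg _) (hft t ht) 2
      _ ≤ L * I := hJ2
  have hKne : K.Nonempty := ⟨_, mem_image_of_mem _ h0mem⟩
  have hSle : sSup K ≤ L * I := csSup_le hKne hbdd
  have hBdd : BddAbove K := ⟨L * I, fun y hy => hbdd y hy⟩
  have h0S : |h 0| ^ 2 ≤ sSup K := le_csSup hBdd (mem_image_of_mem _ h0mem)
  have hLS : |h L| ^ 2 ≤ sSup K := le_csSup hBdd (mem_image_of_mem _ hLmem)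
  have hSnonneg : 0 ≤ sSup K := le_trans (sq_nonneg _) h0S
  have hIS : (1 / L) * sSup K ≤ I := by
    rw [one_div, inv_mul_le_iff₀ hL]
    exact hSle
  constructor
  · have e0 : (h 0) ^ 2 = |h 0| ^ 2 := (sq_abs _).symm
    have eL : (h L) ^ 2 = |h L| ^ 2 := (sq_abs _).symm
    have hω0 : ω * (h 0) ^ 2 ≤ ω * sSup K := by
      rw [e0]; exact mul_le_mul_of_nonneg_left h0S hω.le
    have hωL' : ω * (h L) ^ 2 ≤ ω * sSup K := by
      rw [eL]; exact mul_le_mul_of_nonneg_left hLS hω.le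
    rw [ge_iff_le, sub_mul]
    linarith
  · apply mul_nonneg _ hSnonneg
    rw [sub_nonneg]
    have : (1:ℝ) / (2 * L) = (1 / L) / 2 := by ring
    rw [this] at hωL
    linarith
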